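/- For every k ∈ ℕ and all finite subsets E, F of ι, the k-th powers of the operators R and L on W are given by R^k f_{E,F} = [k]_p! · Σ_{A ⊆ E∖F, |A| = k} (−p)^{θ(E∖A, A)} (−1)^{θ(A, F)} f_{E∖A, A∪F} and L^k f_{E,F} = [k]_p! · Σ_{B ⊆ F∖E, |B| = k} (−p)^{θ(B, F∖B)} (−1)^{θ(E, B)} f_{E∪B, F∖B}, where [k]_p! = Π_{i=1}^{k} (1 + p + ⋯ + p^{i−1}). (Equivalently, the divided powers R^{⟨k⟩} = R^k/[k]_p! and L^{⟨k⟩} = L^k/[k]_p! equal (id⊗∇)(Δ_{(k}⊗id) and (∇⊗id)(id⊗Δ_{k)}) respectively.) -/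

import Mathlib

set_option maxSynthPendingDepth 2

/-- Heaviside theta symbol for finite sets: the number of pairs `(a, b) ∈ A × B` with `a > b`. -/
def Theta {ι : Type*} [LinearOrder ι] (A B : Finset ι) : ℕ :=
  ∑ a ∈ A, ∑ b ∈ B, if b < a then 1 else 0

/-- The q-factorial `[k]_p! = Π_{i=1}^{k} (1 + p + ⋯ + p^{i−1})`. -/
def qfact {R : Type*} [CommRing R] (p : R) (k : ℕ) : R :=
  ∏ i ∈ Finset.range k, ∑ j ∈ Finset.range (i + 1), p ^ j

section Aux
open Finset

variable {ι : Type*} [LinearOrder ι]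

lemma Theta_insert_left {a : ι} {A B : Finset ι} (ha : a ∉ A) :
    Theta (insert a A) B = Theta {a} B + Theta A B := by
  simp [Theta, Finset.sum_insert ha]

lemma Theta_insert_right {b : ι} {A B : Finset ι} (hb : b ∉ B) :
    Theta A (insert b B) = Theta A {b} + Theta A B := by
  simp only [Theta, Finset.sum_insert hb, Finset.sum_singleton, Finset.sum_add_distrib]

lemma Theta_union_left {A B C : Finset ι} (h : Disjoint A B) :
    Theta (A ∪ B) C = Theta A C + Theta B C := by
  simp [Theta, Finset.sum_union h]

lemma Theta_union_right {A B C : Finset ι} (h : Disjoint B C) :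
    Theta A (B ∪ C) = Theta A B + Theta A C := by
  simp only [Theta, Finset.sum_union h]
  rw [Finset.sum_add_distrib]

lemma coeff_eq {F : Type*} [Field F] (p : F) {m1 m2 n1 n2 M N t : ℕ}
    (hm : m1 + m2 = M + t) (hn : n1 + n2 = N + t) :
    ((-p) ^ m1 * (-1 : F) ^ n1) * ((-p) ^ m2 * (-1 : F) ^ n2)
      = p ^ t * ((-p) ^ M * (-1 : F) ^ N) := by
  rw [mul_mul_mul_comm, ← pow_add, ← pow_add, hm, hn, pow_add, pow_add,
    mul_mul_mul_comm, ← mul_pow]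
  norm_num
  ring

lemma theta_R_p {E A : Finset ι} {a : ι} (haE : a ∈ E) (haA : a ∉ A) :
    Theta (E \ A) A + Theta ((E \ A) \ {a}) {a}
      = Theta (E \ insert a A) (insert a A) + Theta {a} A := by
  have h1 : (E \ A) \ {a} = E \ insert a A := by
    ext x; simp only [Finset.mem_sdiff, Finset.mem_singleton, Finset.mem_insert, not_or]; tauto
  have ha' : a ∉ E \ insert a A := by simp
  have h2 : E \ A = insert a (E \ insert a A) := by
    ext x
    by_cases hx : x = a <;> simp [hx, haE, haA]
  rw [h1, h2, Theta_insert_left ha', Theta_insert_right haA]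
  omega

lemma theta_R_s {A Fs : Finset ι} {a : ι} (h : Disjoint A Fs) (haA : a ∉ A) :
    Theta A Fs + Theta {a} (A ∪ Fs) = Theta (insert a A) Fs + Theta {a} A := by
  rw [Theta_union_right h, Theta_insert_left haA]
  omega

lemma theta_L_p {Fs B : Finset ι} {b : ι} (hbF : b ∈ Fs) (hbB : b ∉ B) :
    Theta B (Fs \ B) + Theta {b} ((Fs \ B) \ {b})
      = Theta (insert b B) (Fs \ insert b B) + Theta B {b} := by
  have h1 : (Fs \ B) \ {b} = Fs \ insert b B := by
    ext x; simp only [Finset.mem_sdiff, Finset.mem_singleton, Finset.mem_insert, not_or]; tauto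
  have hb' : b ∉ Fs \ insert b B := by simp
  have h2 : Fs \ B = insert b (Fs \ insert b B) := by
    ext x
    by_cases hx : x = b <;> simp [hx, hbF, hbB]
  rw [h1, h2, Theta_insert_right hb', Theta_insert_left hbB]
  omega

lemma theta_L_s {E B : Finset ι} {b : ι} (h : Disjoint E B) (hbB : b ∉ B) :
    Theta E B + Theta (E ∪ B) {b} = Theta E (insert b B) + Theta B {b} := by
  rw [Theta_union_left h, Theta_insert_right hbB]
  omega

lemma sum_pow_theta_lt {F : Type*} [CommRing F] (p : F) (S : Finset ι) :
    ∑ a ∈ S, p ^ Theta {a} (S.erase a) = ∑ j ∈ Finset.range S.card, p ^ j := by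
  induction S using Finset.induction_on_max with
  | empty => simp
  | insert a S ha IH =>
    have haS : a ∉ S := fun h => lt_irrefl a (ha a h)
    rw [Finset.sum_insert haS, Finset.card_insert_of_notMem haS,
      Finset.sum_range_succ, Finset.erase_insert haS]
    have h1 : Theta {a} S = S.card := by
      simp only [Theta, Finset.sum_singleton]
      rw [Finset.card_eq_sum_ones]
      exact Finset.sum_congr rfl fun b hb => by simp [ha b hb]
    have h2 : ∑ b ∈ S, p ^ Theta {b} ((insert a S).erase b)
        = ∑ b ∈ S, p ^ Theta {b} (S.erase b) := by
      refine Finset.sum_congr rfl fun b hb => ?_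
      have hab : a ≠ b := fun h => haS (h ▸ hb)
      have hanb : a ∉ S.erase b := fun h => haS (Finset.mem_of_mem_erase h)
      rw [Finset.erase_insert_of_ne hab, Theta_insert_right hanb]
      have : Theta {b} {a} = 0 := by
        simp only [Theta, Finset.sum_singleton]
        simp [not_lt_of_gt (ha b hb)]
      rw [this, zero_add]
    rw [h1, h2, IH, add_comm]

lemma sum_pow_theta_gt {F : Type*} [CommRing F] (p : F) (S : Finset ι) :
    ∑ b ∈ S, p ^ Theta (S.erase b) {b} = ∑ j ∈ Finset.range S.card, p ^ j := by
  induction S using Finset.induction_on_min with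
  | empty => simp
  | insert b S hb IH =>
    have hbS : b ∉ S := fun h => lt_irrefl b (hb b h)
    rw [Finset.sum_insert hbS, Finset.card_insert_of_notMem hbS,
      Finset.sum_range_succ, Finset.erase_insert hbS]
    have h1 : Theta S {b} = S.card := by
      simp only [Theta, Finset.sum_singleton]
      rw [Finset.card_eq_sum_ones]
      exact Finset.sum_congr rfl fun x hx => by simp [hb x hx]
    have h2 : ∑ x ∈ S, p ^ Theta ((insert b S).erase x) {x}
        = ∑ x ∈ S, p ^ Theta (S.erase x) {x} := by
      refine Finset.sum_congr rfl fun x hx => ?_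
      have hbx : b ≠ x := fun h => hbS (h ▸ hx)
      have hbnx : b ∉ S.erase x := fun h => hbS (Finset.mem_of_mem_erase h)
      rw [Finset.erase_insert_of_ne hbx, Theta_insert_left hbnx]
      have : Theta {b} {x} = 0 := by
        simp only [Theta, Finset.sum_singleton]
        simp [not_lt_of_gt (hb x hx)]
      rw [this, zero_add]
    rw [h1, h2, IH, add_comm]

lemma pow_R_eq {F : Type*} [Field F] {p : F}
    (R : ((Finset ι × Finset ι) →₀ F) →ₗ[F] ((Finset ι × Finset ι) →₀ F))
    (hR : ∀ E Fs : Finset ι,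
      R (Finsupp.single (E, Fs) 1) =
        ∑ a ∈ E \ Fs, ((-p) ^ Theta (E \ {a}) {a} * (-1 : F) ^ Theta {a} Fs) •
          Finsupp.single (E \ {a}, Fs ∪ {a}) 1)
    (k : ℕ) (E Fs : Finset ι) :
    (R ^ k) (Finsupp.single (E, Fs) 1) =
      qfact p k • ∑ A ∈ (E \ Fs).powersetCard k,
        ((-p) ^ Theta (E \ A) A * (-1 : F) ^ Theta A Fs) •
          Finsupp.single (E \ A, A ∪ Fs) (1 : F) := by
  induction k with
  | zero =>
    simp only [pow_zero, Module.End.one_apply, Finset.powersetCard_zero,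
      Finset.sum_singleton, Finset.sdiff_empty, Finset.empty_union]
    simp [Theta, qfact]
  | succ k IH =>
    rw [pow_succ', Module.End.mul_apply, IH, map_smul, map_sum]
    have step1 : ∀ A ∈ (E \ Fs).powersetCard k,
        R ((((-p) ^ Theta (E \ A) A * (-1:F) ^ Theta A Fs)) •
            Finsupp.single (E \ A, A ∪ Fs) (1:F))
          = ∑ a ∈ (E \ Fs) \ A,
              (((-p) ^ Theta (E \ A) A * (-1:F) ^ Theta A Fs) *
               ((-p) ^ Theta ((E \ A) \ {a}) {a} * (-1:F) ^ Theta {a} (A ∪ Fs))) •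
              Finsupp.single (E \ insert a A, insert a A ∪ Fs) (1:F) := by
      intro A hA
      rw [map_smul, hR, Finset.smul_sum]
      have hset : (E \ A) \ (A ∪ Fs) = (E \ Fs) \ A := by
        ext x
        simp only [Finset.mem_sdiff, Finset.mem_union, not_or]
        tauto
      rw [hset]
      refine Finset.sum_congr rfl fun a ha => ?_
      have e1 : (E \ A) \ {a} = E \ insert a A := by
        ext x
        simp only [Finset.mem_sdiff, Finset.mem_singleton, Finset.mem_insert, not_or]
        tauto
      have e2 : (A ∪ Fs) ∪ {a} = insert a A ∪ Fs := by
        ext x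
        simp only [Finset.mem_union, Finset.mem_singleton, Finset.mem_insert]
        tauto
      rw [smul_smul, e1, e2]
    rw [Finset.sum_congr rfl step1]
    have key : (∑ A ∈ (E \ Fs).powersetCard k, ∑ a ∈ (E \ Fs) \ A,
              (((-p) ^ Theta (E \ A) A * (-1:F) ^ Theta A Fs) *
               ((-p) ^ Theta ((E \ A) \ {a}) {a} * (-1:F) ^ Theta {a} (A ∪ Fs))) •
              Finsupp.single (E \ insert a A, insert a A ∪ Fs) (1:F))
        = ∑ A ∈ (E \ Fs).powersetCard (k+1), ∑ a ∈ A,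
            (p ^ Theta {a} (A.erase a) *
              ((-p) ^ Theta (E \ A) A * (-1:F) ^ Theta A Fs)) •
            Finsupp.single (E \ A, A ∪ Fs) (1:F) := by
      rw [Finset.sum_sigma', Finset.sum_sigma']
      refine Finset.sum_nbij' (fun x => ⟨insert x.2 x.1, x.2⟩)
        (fun y => ⟨y.1.erase y.2, y.2⟩) ?_ ?_ ?_ ?_ ?_
      · rintro ⟨A, a⟩ hx
        simp only [Finset.mem_sigma, Finset.mem_powersetCard, Finset.mem_sdiff] at hx ⊢
        obtain ⟨⟨hsub, hcard⟩, haEF, haA⟩ := hx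
        refine ⟨⟨Finset.insert_subset (Finset.mem_sdiff.mpr haEF) hsub, ?_⟩, Finset.mem_insert_self _ _⟩
        rw [Finset.card_insert_of_notMem haA, hcard]
      · rintro ⟨A, a⟩ hx
        simp only [Finset.mem_sigma, Finset.mem_powersetCard, Finset.mem_sdiff] at hx ⊢
        obtain ⟨⟨hsub, hcard⟩, ha⟩ := hx
        exact ⟨⟨(Finset.erase_subset _ _).trans hsub, by
            rw [Finset.card_erase_of_mem ha, hcard]; omega⟩, Finset.mem_sdiff.mp (hsub ha), Finset.notMem_erase _ _⟩
      · rintro ⟨A, a⟩ hx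
        simp only [Finset.mem_sigma, Finset.mem_powersetCard, Finset.mem_sdiff] at hx
        simp [Finset.erase_insert hx.2.2]
      · rintro ⟨A, a⟩ hx
        simp only [Finset.mem_sigma, Finset.mem_powersetCard] at hx
        simp [Finset.insert_erase hx.2]
      · rintro ⟨A, a⟩ hx
        simp only [Finset.mem_sigma, Finset.mem_powersetCard, Finset.mem_sdiff] at hx
        obtain ⟨⟨hsub, hcard⟩, haEF, haA⟩ := hx
        have haE : a ∈ E := haEF.1
        have haF : a ∉ Fs := haEF.2
        have hdisj : Disjoint A Fs := Finset.disjoint_left.mpr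
          fun x hxA hxF => (Finset.mem_sdiff.mp (hsub hxA)).2 hxF
        simp only
        rw [Finset.erase_insert haA]
        congr 1
        exact coeff_eq p (theta_R_p haE haA) (theta_R_s hdisj haA)
    rw [key]
    have step3 : ∀ A ∈ (E \ Fs).powersetCard (k+1),
        (∑ a ∈ A, (p ^ Theta {a} (A.erase a) *
            ((-p) ^ Theta (E \ A) A * (-1:F) ^ Theta A Fs)) •
          Finsupp.single (E \ A, A ∪ Fs) (1:F))
        = (∑ j ∈ Finset.range (k+1), p ^ j) •
            (((-p) ^ Theta (E \ A) A * (-1:F) ^ Theta A Fs) •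
              Finsupp.single (E \ A, A ∪ Fs) (1:F)) := by
      intro A hA
      have hcard : A.card = k + 1 := (Finset.mem_powersetCard.mp hA).2
      rw [← hcard, ← sum_pow_theta_lt p A, Finset.sum_smul]
      exact Finset.sum_congr rfl fun a _ => by rw [mul_smul]
    rw [Finset.sum_congr rfl step3, ← Finset.smul_sum, smul_smul]
    congr 1
    rw [qfact, qfact, Finset.prod_range_succ]

lemma pow_L_eq {F : Type*} [Field F] {p : F}
    (L : ((Finset ι × Finset ι) →₀ F) →ₗ[F] ((Finset ι × Finset ι) →₀ F))
    (hL : ∀ E Fs : Finset ι,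
      L (Finsupp.single (E, Fs) 1) =
        ∑ b ∈ Fs \ E, ((-p) ^ Theta {b} (Fs \ {b}) * (-1 : F) ^ Theta E {b}) •
          Finsupp.single (E ∪ {b}, Fs \ {b}) 1)
    (k : ℕ) (E Fs : Finset ι) :
    (L ^ k) (Finsupp.single (E, Fs) 1) =
      qfact p k • ∑ B ∈ (Fs \ E).powersetCard k,
        ((-p) ^ Theta B (Fs \ B) * (-1 : F) ^ Theta E B) •
          Finsupp.single (E ∪ B, Fs \ B) (1 : F) := by
  induction k with
  | zero =>
    simp only [pow_zero, Module.End.one_apply, Finset.powersetCard_zero,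
      Finset.sum_singleton, Finset.sdiff_empty, Finset.union_empty]
    simp [Theta, qfact]
  | succ k IH =>
    rw [pow_succ', Module.End.mul_apply, IH, map_smul, map_sum]
    have step1 : ∀ B ∈ (Fs \ E).powersetCard k,
        L ((((-p) ^ Theta B (Fs \ B) * (-1:F) ^ Theta E B)) •
            Finsupp.single (E ∪ B, Fs \ B) (1:F))
          = ∑ b ∈ (Fs \ E) \ B,
              (((-p) ^ Theta B (Fs \ B) * (-1:F) ^ Theta E B) *
               ((-p) ^ Theta {b} ((Fs \ B) \ {b}) * (-1:F) ^ Theta (E ∪ B) {b})) •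
              Finsupp.single (E ∪ insert b B, Fs \ insert b B) (1:F) := by
      intro B hB
      rw [map_smul, hL, Finset.smul_sum]
      have hset : (Fs \ B) \ (E ∪ B) = (Fs \ E) \ B := by
        ext x
        simp only [Finset.mem_sdiff, Finset.mem_union, not_or]
        tauto
      rw [hset]
      refine Finset.sum_congr rfl fun b hb => ?_
      have e1 : (Fs \ B) \ {b} = Fs \ insert b B := by
        ext x
        simp only [Finset.mem_sdiff, Finset.mem_singleton, Finset.mem_insert, not_or]
        tauto
      have e2 : (E ∪ B) ∪ {b} = E ∪ insert b B := by
        ext x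
        simp only [Finset.mem_union, Finset.mem_singleton, Finset.mem_insert]
        tauto
      rw [smul_smul, e1, e2]
    rw [Finset.sum_congr rfl step1]
    have key : (∑ B ∈ (Fs \ E).powersetCard k, ∑ b ∈ (Fs \ E) \ B,
              (((-p) ^ Theta B (Fs \ B) * (-1:F) ^ Theta E B) *
               ((-p) ^ Theta {b} ((Fs \ B) \ {b}) * (-1:F) ^ Theta (E ∪ B) {b})) •
              Finsupp.single (E ∪ insert b B, Fs \ insert b B) (1:F))
        = ∑ B ∈ (Fs \ E).powersetCard (k+1), ∑ b ∈ B,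
            (p ^ Theta (B.erase b) {b} *
              ((-p) ^ Theta B (Fs \ B) * (-1:F) ^ Theta E B)) •
            Finsupp.single (E ∪ B, Fs \ B) (1:F) := by
      rw [Finset.sum_sigma', Finset.sum_sigma']
      refine Finset.sum_nbij' (fun x => ⟨insert x.2 x.1, x.2⟩)
        (fun y => ⟨y.1.erase y.2, y.2⟩) ?_ ?_ ?_ ?_ ?_
      · rintro ⟨B, b⟩ hx
        simp only [Finset.mem_sigma, Finset.mem_powersetCard, Finset.mem_sdiff] at hx ⊢
        obtain ⟨⟨hsub, hcard⟩, hbFE, hbB⟩ := hx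
        refine ⟨⟨Finset.insert_subset (Finset.mem_sdiff.mpr hbFE) hsub, ?_⟩,
          Finset.mem_insert_self _ _⟩
        rw [Finset.card_insert_of_notMem hbB, hcard]
      · rintro ⟨B, b⟩ hx
        simp only [Finset.mem_sigma, Finset.mem_powersetCard, Finset.mem_sdiff] at hx ⊢
        obtain ⟨⟨hsub, hcard⟩, hb⟩ := hx
        exact ⟨⟨(Finset.erase_subset _ _).trans hsub, by
            rw [Finset.card_erase_of_mem hb, hcard]; omega⟩,
          Finset.mem_sdiff.mp (hsub hb), Finset.notMem_erase _ _⟩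
      · rintro ⟨B, b⟩ hx
        simp only [Finset.mem_sigma, Finset.mem_powersetCard, Finset.mem_sdiff] at hx
        simp [Finset.erase_insert hx.2.2]
      · rintro ⟨B, b⟩ hx
        simp only [Finset.mem_sigma, Finset.mem_powersetCard] at hx
        simp [Finset.insert_erase hx.2]
      · rintro ⟨B, b⟩ hx
        simp only [Finset.mem_sigma, Finset.mem_powersetCard, Finset.mem_sdiff] at hx
        obtain ⟨⟨hsub, hcard⟩, hbFE, hbB⟩ := hx
        have hbF : b ∈ Fs := hbFE.1
        have hdisj : Disjoint E B := Finset.disjoint_left.mpr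
          fun x hxE hxB => (Finset.mem_sdiff.mp (hsub hxB)).2 hxE
        simp only
        rw [Finset.erase_insert hbB]
        congr 1
        exact coeff_eq p (theta_L_p hbF hbB) (theta_L_s hdisj hbB)
    rw [key]
    have step3 : ∀ B ∈ (Fs \ E).powersetCard (k+1),
        (∑ b ∈ B, (p ^ Theta (B.erase b) {b} *
            ((-p) ^ Theta B (Fs \ B) * (-1:F) ^ Theta E B)) •
          Finsupp.single (E ∪ B, Fs \ B) (1:F))
        = (∑ j ∈ Finset.range (k+1), p ^ j) •
            (((-p) ^ Theta B (Fs \ B) * (-1:F) ^ Theta E B) •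
              Finsupp.single (E ∪ B, Fs \ B) (1:F)) := by
      intro B hB
      have hcard : B.card = k + 1 := (Finset.mem_powersetCard.mp hB).2
      rw [← hcard, ← sum_pow_theta_gt p B, Finset.sum_smul]
      exact Finset.sum_congr rfl fun b _ => by rw [mul_smul]
    rw [Finset.sum_congr rfl step3, ← Finset.smul_sum, smul_smul]
    congr 1
    rw [qfact, qfact, Finset.prod_range_succ]

end Aux

/-- Formulas for the `k`-th powers of the operators `R` and `L` on `W = Λ_p(V) ⊗ Λ_p(V)`:
`R^k f_{E,F} = [k]_p! Σ_{A ⊆ E∖F, |A|=k} (−p)^{θ(E∖A,A)} (−1)^{θ(A,F)} f_{E∖A, A∪F}` and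
`L^k f_{E,F} = [k]_p! Σ_{B ⊆ F∖E, |B|=k} (−p)^{θ(B,F∖B)} (−1)^{θ(E,B)} f_{E∪B, F∖B}`. -/
theorem pow_R_pow_L (F : Type*) [Field F] (p : F) (ι : Type*) [LinearOrder ι]
    (L R : ((Finset ι × Finset ι) →₀ F) →ₗ[F] ((Finset ι × Finset ι) →₀ F))
    (hL : ∀ E Fs : Finset ι,
      L (Finsupp.single (E, Fs) 1) =
        ∑ b ∈ Fs \ E, ((-p) ^ Theta {b} (Fs \ {b}) * (-1 : F) ^ Theta E {b}) •
          Finsupp.single (E ∪ {b}, Fs \ {b}) 1)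
    (hR : ∀ E Fs : Finset ι,
      R (Finsupp.single (E, Fs) 1) =
        ∑ a ∈ E \ Fs, ((-p) ^ Theta (E \ {a}) {a} * (-1 : F) ^ Theta {a} Fs) •
          Finsupp.single (E \ {a}, Fs ∪ {a}) 1)
    (k : ℕ) (E Fs : Finset ι) :
    (R ^ k) (Finsupp.single (E, Fs) 1) =
      qfact p k • ∑ A ∈ (E \ Fs).powersetCard k,
        ((-p) ^ Theta (E \ A) A * (-1 : F) ^ Theta A Fs) •
          Finsupp.single (E \ A, A ∪ Fs) (1 : F) ∧
    (L ^ k) (Finsupp.single (E, Fs) 1) =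
      qfact p k • ∑ B ∈ (Fs \ E).powersetCard k,
        ((-p) ^ Theta B (Fs \ B) * (-1 : F) ^ Theta E B) •
          Finsupp.single (E ∪ B, Fs \ B) (1 : F) := by
  exact ⟨pow_R_eq R hR k E Fs, pow_L_eq L hL k E Fs⟩
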